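/- Let R be a Noetherian integral domain of Krull dimension one with finitely many maximal ideals. Then R has a prime element if and only if there exists a maximal ideal 𝔪 of R such that the localization of R at 𝔪 is a discrete valuation ring. -/

import Mathlib

open IsLocalRing

theorem stmt19 (R : Type*) [CommRing R] [IsDomain R] [IsNoetherianRing R]
    (hdim : ∀ P : Ideal R, P.IsPrime → P ≠ ⊥ → P.IsMaximal) (hnf : ¬ IsField R)
    (hfin : {I : Ideal R | I.IsMaximal}.Finite) :
    (∃ p : R, Prime p) ↔
      ∃ (𝔪 : Ideal R) (_ : 𝔪.IsMaximal),
        IsDiscreteValuationRing (Localization.AtPrime 𝔪) := by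
  classical
  constructor
  · rintro ⟨p, hp⟩
    have hprime : (Ideal.span {p} : Ideal R).IsPrime :=
      (Ideal.span_singleton_prime hp.ne_zero).mpr hp
    have hm : (Ideal.span {p} : Ideal R).IsMaximal :=
      hdim _ hprime (by simpa [Ideal.span_singleton_eq_bot] using hp.ne_zero)
    refine ⟨Ideal.span {p}, hm, ?_⟩
    letI : IsNoetherianRing (Localization.AtPrime (Ideal.span {p} : Ideal R)) :=
      IsLocalization.isNoetherianRing (Ideal.span {p} : Ideal R).primeCompl _ inferInstance
    have hinj : Function.Injective
        (algebraMap R (Localization.AtPrime (Ideal.span {p} : Ideal R))) :=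
      IsLocalization.injective _ (Ideal.span {p} : Ideal R).primeCompl_le_nonZeroDivisors
    have hmax : maximalIdeal (Localization.AtPrime (Ideal.span {p} : Ideal R)) =
        Ideal.span {algebraMap R (Localization.AtPrime (Ideal.span {p} : Ideal R)) p} := by
      rw [← Localization.AtPrime.map_eq_maximalIdeal (I := (Ideal.span {p} : Ideal R)),
        Ideal.map_span]
      simp
    have hne : maximalIdeal (Localization.AtPrime (Ideal.span {p} : Ideal R)) ≠ ⊥ := by
      rw [hmax, Ne, Ideal.span_singleton_eq_bot]
      exact fun h => hp.ne_zero (hinj (by rwa [map_zero]))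
    have hnf' : ¬ IsField (Localization.AtPrime (Ideal.span {p} : Ideal R)) :=
      fun h => hne (IsLocalRing.isField_iff_maximalIdeal_eq.mp h)
    have h5 : (maximalIdeal (Localization.AtPrime (Ideal.span {p} : Ideal R))).IsPrincipal :=
      ⟨⟨_, hmax⟩⟩
    exact ((IsDiscreteValuationRing.TFAE (Localization.AtPrime (Ideal.span {p} : Ideal R))
      hnf').out 0 4).mpr h5
  · rintro ⟨𝔪, hm, hdvr⟩
    haveI := hm.isPrime
    haveI := hdvr
    letI : IsNoetherianRing (Localization.AtPrime 𝔪) :=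
      IsLocalization.isNoetherianRing 𝔪.primeCompl _ inferInstance
    have hinj : Function.Injective (algebraMap R (Localization.AtPrime 𝔪)) :=
      IsLocalization.injective _ 𝔪.primeCompl_le_nonZeroDivisors
    have hmap : Ideal.map (algebraMap R (Localization.AtPrime 𝔪)) 𝔪 =
        maximalIdeal (Localization.AtPrime 𝔪) :=
      Localization.AtPrime.map_eq_maximalIdeal
    -- 𝔪² ⊊ 𝔪 : find t ∈ 𝔪 \ 𝔪²
    obtain ⟨t, ht, ht2⟩ : ∃ t, t ∈ 𝔪 ∧ t ∉ 𝔪 ^ 2 := by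
      by_contra h
      push_neg at h
      have hsq : 𝔪 ≤ 𝔪 ^ 2 := fun x hx => h x hx
      have hMsq : maximalIdeal (Localization.AtPrime 𝔪) ≤
          maximalIdeal (Localization.AtPrime 𝔪) ^ 2 := by
        rw [← hmap, ← Ideal.map_pow]
        exact Ideal.map_mono hsq
      have : maximalIdeal (Localization.AtPrime 𝔪) = ⊥ := by
        refine Submodule.eq_bot_of_le_smul_of_le_jacobson_bot
          (maximalIdeal (Localization.AtPrime 𝔪)) _ (IsNoetherian.noetherian _) ?_ ?_
        · calc maximalIdeal (Localization.AtPrime 𝔪)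
              ≤ maximalIdeal (Localization.AtPrime 𝔪) ^ 2 := hMsq
            _ = _ := by rw [sq]; rfl
        · rw [jacobson_eq_maximalIdeal ⊥ bot_ne_top]
      exact IsDiscreteValuationRing.not_a_field _ this
    -- CRT to find r ≡ t mod 𝔪², r ≡ 1 mod other maximal ideals
    haveI : Finite {I : Ideal R | I.IsMaximal} := hfin.to_subtype
    have hpair : Pairwise fun (i j : {I : Ideal R | I.IsMaximal}) =>
        IsCoprime (if i.1 = 𝔪 then 𝔪 ^ 2 else i.1) (if j.1 = 𝔪 then 𝔪 ^ 2 else j.1) := by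
      intro i j hij
      have hij' : (i : Ideal R) ≠ j := fun h => hij (Subtype.ext h)
      have key : ∀ (I J : Ideal R), I.IsMaximal → J.IsMaximal → I ≠ J →
          IsCoprime (if I = 𝔪 then 𝔪 ^ 2 else I) (if J = 𝔪 then 𝔪 ^ 2 else J) := by
        intro I J hI hJ hIJ
        split_ifs with h1 h2 h2
        · exact absurd (h1.trans h2.symm) hIJ
        · exact (Ideal.isCoprime_iff_sup_eq.mpr (hm.coprime_of_ne hJ
            (fun h => h2 (h.symm ▸ rfl)))).pow_left
        · exact ((Ideal.isCoprime_iff_sup_eq.mpr (hm.coprime_of_ne hI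
            (fun h => h1 (h.symm ▸ rfl)))).pow_left).symm
        · exact Ideal.isCoprime_iff_sup_eq.mpr (hI.coprime_of_ne hJ hIJ)
      exact key i j i.2 j.2 hij'
    obtain ⟨r, hr⟩ := Ideal.exists_forall_sub_mem_ideal
      (I := fun i : {I : Ideal R | I.IsMaximal} => if i.1 = 𝔪 then 𝔪 ^ 2 else i.1)
      hpair (fun i => if i.1 = 𝔪 then t else 1)
    have hrt : r - t ∈ 𝔪 ^ 2 := by simpa using hr ⟨𝔪, hm⟩
    have hrm : r ∈ 𝔪 := by
      have := (Ideal.pow_le_self two_ne_zero) hrt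
      simpa using add_mem this ht
    have hrm2 : r ∉ 𝔪 ^ 2 := fun h => ht2 (by simpa using sub_mem h hrt)
    have hr0 : r ≠ 0 := fun h => hrm2 (h ▸ zero_mem _)
    have hrP : ∀ P : Ideal R, P.IsMaximal → P ≠ 𝔪 → r ∉ P := by
      intro P hP hne hmem
      have h1 : r - 1 ∈ P := by simpa [hne] using hr ⟨P, hP⟩
      exact hP.ne_top (Ideal.eq_top_iff_one _ |>.mpr (by simpa using sub_mem hmem h1))
    -- span {r} = 𝔪
    have hspan : Ideal.span {r} = 𝔪 := by
      apply Ideal.eq_of_localization_maximal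
      intro P hP
      by_cases hPm : P = 𝔪
      · subst hPm
        rw [Ideal.map_span, Set.image_singleton, hmap]
        set φ := algebraMap R (Localization.AtPrime P) with hφ
        have hmem : φ r ∈ maximalIdeal (Localization.AtPrime P) :=
          (IsLocalization.AtPrime.to_map_mem_maximal_iff _ P r).mpr hrm
        have hnotsq : φ r ∉ maximalIdeal (Localization.AtPrime P) ^ 2 := by
          intro hmem2
          rw [← hmap, ← Ideal.map_pow] at hmem2
          obtain ⟨⟨a, s⟩, has⟩ := (IsLocalization.mem_map_algebraMap_iff P.primeCompl _).mp hmem2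
          rw [← map_mul] at has
          have : r * (s : R) ∈ P ^ 2 := by
            have := hinj has
            rw [this]; exact a.2
          have hprimary : (P ^ 2 : Ideal R).IsPrimary :=
            Ideal.isPrimary_of_isMaximal_radical (by
              rw [Ideal.radical_pow P two_ne_zero, hP.isPrime.radical]; exact hP)
          rcases (Ideal.isPrimary_iff.mp hprimary).2 this with h | h
          · exact hrm2 h
          · rw [Ideal.radical_pow P two_ne_zero, hP.isPrime.radical] at h
            exact s.2 h
        obtain ⟨π, hπ⟩ := IsDiscreteValuationRing.exists_irreducible (Localization.AtPrime P)
        have hMπ : maximalIdeal (Localization.AtPrime P) = Ideal.span {π} :=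
          (IsDiscreteValuationRing.irreducible_iff_uniformizer π).mp hπ
        obtain ⟨c, hc⟩ := Ideal.mem_span_singleton.mp (hMπ ▸ hmem)
        have hcu : IsUnit c := by
          by_contra hcu
          have : c ∈ maximalIdeal (Localization.AtPrime P) := hcu
          rw [hMπ] at this
          obtain ⟨d, hd⟩ := Ideal.mem_span_singleton.mp this
          apply hnotsq
          rw [hMπ, Ideal.span_singleton_pow, Ideal.mem_span_singleton]
          exact ⟨d, by rw [hc, hd]; ring⟩
        rw [hMπ]
        exact (Ideal.span_singleton_eq_span_singleton.mpr
          ⟨hcu.unit, by rw [IsUnit.unit_spec, hc, mul_comm]⟩).symm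
      · have h1 : Ideal.map (algebraMap R (Localization.AtPrime P)) (Ideal.span {r}) = ⊤ := by
          apply Ideal.eq_top_of_isUnit_mem _ (Ideal.mem_map_of_mem _
            (Ideal.mem_span_singleton_self r))
          exact IsLocalization.map_units _ (⟨r, hrP P hP hPm⟩ : P.primeCompl)
        have h2 : Ideal.map (algebraMap R (Localization.AtPrime P)) 𝔪 = ⊤ := by
          obtain ⟨x, hx𝔪, hxP⟩ : ∃ x ∈ 𝔪, x ∉ P := by
            by_contra h
            push_neg at h
            exact hPm (hm.eq_of_le hP.ne_top (fun x hx => h x hx)).symm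
          apply Ideal.eq_top_of_isUnit_mem _ (Ideal.mem_map_of_mem _ hx𝔪)
          exact IsLocalization.map_units _ (⟨x, hxP⟩ : P.primeCompl)
        rw [h1, h2]
    exact ⟨r, (Ideal.span_singleton_prime hr0).mp (hspan ▸ hm.isPrime)⟩
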